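/- For r = 2 and nonnegative integers x, y, z: ∫₀¹∫₀¹ t₁^x (1-t₁)^y t₂^x (1-t₂)^y (t₁-t₂)^{2z} dt₁ dt₂ = ∏_{j=1}^{2} (x+(j-1)z)! (y+(j-1)z)! (jz)! / ((x+y+j z+1)! z!). -/

import Mathlib

open Finset

lemma factR_ne (n : ℕ) : ((n.factorial : ℝ)) ≠ 0 := by
  exact_mod_cast n.factorial_ne_zero

/-- alternating sum lemma -/
lemma L0 (n : ℕ) : ∀ x : ℕ, ∑ k ∈ range (n+1), (-1:ℝ)^k * ((n.choose k : ℝ)) / ((x:ℝ)+k+1)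
    = (n.factorial : ℝ) * (x.factorial : ℝ) / ((n+x+1).factorial : ℝ) := by
  induction n with
  | zero =>
    intro x
    have : (0+x+1).factorial = (x+1) * x.factorial := by
      rw [show 0+x+1 = x+1 from by omega, Nat.factorial_succ]
    rw [this, Finset.sum_range_one]
    have hx : ((x:ℝ)+1) ≠ 0 := by positivity
    push_cast
    field_simp
    simp
  | succ n ih =>
    intro x
    set F : ℕ → ℝ := fun k => (-1:ℝ)^k * (((n+1).choose k : ℝ)) / ((x:ℝ)+k+1) with hF
    set G : ℕ → ℝ := fun k => (-1:ℝ)^k * ((n.choose k : ℝ)) / ((x:ℝ)+k+1) with hG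
    set H : ℕ → ℝ := fun k => (-1:ℝ)^k * ((n.choose (k+1) : ℝ)) / ((x:ℝ)+k+2) with hH
    set G2 : ℕ → ℝ := fun k => (-1:ℝ)^k * ((n.choose k : ℝ)) / ((x:ℝ)+k+2) with hG2
    have sumH : ∑ k ∈ range (n+1), H k
        = 1/((x:ℝ)+1) - (n.factorial : ℝ) * (x.factorial : ℝ) / ((n+x+1).factorial : ℝ) := by
      have h1 : ∑ k ∈ range (n+2), G k = ∑ k ∈ range (n+1), G k := by
        rw [Finset.sum_range_succ]
        simp [hG, Nat.choose_succ_self]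
      have h2 : ∑ k ∈ range (n+2), G k = (∑ k ∈ range (n+1), (- H k)) + G 0 :=  by
        rw [Finset.sum_range_succ']
        congr 1
        apply Finset.sum_congr rfl
        intro k _
        simp only [hG, hH]
        push_cast
        ring
      have h3 : G 0 = 1/((x:ℝ)+1) := by simp [hG]
      have h4 : ∑ k ∈ range (n+1), G k
          = (n.factorial : ℝ) * (x.factorial : ℝ) / ((n+x+1).factorial : ℝ) := by
        simp only [hG]; exact ih x
      rw [h2, h3, Finset.sum_neg_distrib] at h1
      linarith [h1, h4]
    have sumG2 : ∑ k ∈ range (n+1), G2 k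
        = (n.factorial : ℝ) * ((x+1).factorial : ℝ) / ((n+x+2).factorial : ℝ) := by
      have h := ih (x+1)
      rw [show n+(x+1)+1 = n+x+2 from by omega] at h
      rw [← h]
      apply Finset.sum_congr rfl
      intro k _
      simp only [hG2]
      push_cast
      ring_nf
    have main : ∑ k ∈ range (n+2), F k = (∑ k ∈ range (n+1), (- G2 k - H k)) + F 0 := by
      rw [Finset.sum_range_succ']
      congr 1
      apply Finset.sum_congr rfl
      intro k _
      simp only [hF, hG2, hH]
      have hc : (((n+1).choose (k+1) : ℝ)) = ((n.choose k : ℝ)) + ((n.choose (k+1) : ℝ)) := by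
        exact_mod_cast congrArg (Nat.cast : ℕ → ℝ) (Nat.choose_succ_succ n k)
      push_cast [Nat.choose_succ_succ n k]
      ring
    have hF0 : F 0 = 1/((x:ℝ)+1) := by simp [hF]
    rw [main, hF0, Finset.sum_sub_distrib, Finset.sum_neg_distrib, sumH, sumG2]
    have e1 : ((n+1+x+1).factorial : ℝ) = ((n+x+2 : ℕ) : ℝ) * ((n+x+1).factorial : ℝ) := by
      rw [show n+1+x+1 = (n+x+1)+1 from by omega, Nat.factorial_succ]
      push_cast; ring
    have e2 : ((n+x+2).factorial : ℝ) = ((n+x+2 : ℕ) : ℝ) * ((n+x+1).factorial : ℝ) := by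
      rw [show n+x+2 = (n+x+1)+1 from by omega, Nat.factorial_succ]
      push_cast; ring
    have e3 : (((x+1).factorial : ℝ)) = ((x:ℝ)+1) * (x.factorial : ℝ) := by
      rw [Nat.factorial_succ]; push_cast; ring
    have e4 : (((n+1).factorial : ℝ)) = ((n:ℝ)+1) * (n.factorial : ℝ) := by
      rw [Nat.factorial_succ]; push_cast; ring
    rw [e1, e2, e3, e4]
    have hx : ((x:ℝ)+1) ≠ 0 := by positivity
    have hnx : ((n+x+2 : ℕ) : ℝ) ≠ 0 := by positivity
    have hf1 := factR_ne (n+x+1)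
    have hf2 := factR_ne n
    have hf3 := factR_ne x
    field_simp
    push_cast
    ring

noncomputable def Bt (a b : ℕ) : ℝ := ((a.factorial : ℝ) * (b.factorial : ℝ)) / ((a+b+1).factorial : ℝ)

lemma beta_eval (a b : ℕ) : ∫ t in (0:ℝ)..1, t^a * (1-t)^b = Bt a b := by
  have hpt : ∀ t : ℝ, t^a * (1-t)^b
      = ∑ m ∈ range (b+1), (-1:ℝ)^m * ((b.choose m : ℝ)) * t^(a+m) := by
    intro t
    have h1 : (1-t)^b = ∑ m ∈ range (b+1), (-1:ℝ)^m * ((b.choose m : ℝ)) * t^m := by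
      rw [show (1:ℝ)-t = -t+1 from by ring, add_pow]
      apply Finset.sum_congr rfl
      intro m _
      rw [neg_pow]
      ring
    rw [h1, Finset.mul_sum]
    apply Finset.sum_congr rfl
    intro m _
    rw [pow_add]
    ring
  have hInt : ∫ t in (0:ℝ)..1, t^a * (1-t)^b
      = ∑ m ∈ range (b+1), ∫ t in (0:ℝ)..1, (-1:ℝ)^m * ((b.choose m : ℝ)) * t^(a+m) := by
    rw [← intervalIntegral.integral_finset_sum]
    · apply intervalIntegral.integral_congr
      intro t _
      exact hpt t
    · intro m _
      exact (Continuous.intervalIntegrable (by continuity) 0 1)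
  rw [hInt]
  have hterm : ∀ m ∈ range (b+1), (∫ t in (0:ℝ)..1, (-1:ℝ)^m * ((b.choose m : ℝ)) * t^(a+m))
      = (-1:ℝ)^m * ((b.choose m : ℝ)) / ((a:ℝ)+m+1) := by
    intro m _
    rw [intervalIntegral.integral_const_mul, integral_pow]
    push_cast
    norm_num
    ring
  rw [Finset.sum_congr rfl hterm, L0 b a, show b+a+1 = a+b+1 from by omega, Bt]
  ring

noncomputable def gA (x y z : ℕ) : ℕ → ℝ
  | 0 => 0
  | (k+1) => (-1:ℝ)^(k+1) * (((2*z - k) : ℕ) : ℝ) * (((2*z).choose k : ℝ))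
      * ((x+k+1).factorial : ℝ) * ((x+(2*z-k)).factorial : ℝ) * ((y.factorial : ℝ))^2
      / (((x+y+k+2).factorial : ℝ) * ((x+y+(2*z-k)+1).factorial : ℝ))

lemma gA_succ (x y z k j : ℕ) (hkj : k + j = 2*z) :
    gA x y z (k+1) = (-1:ℝ)^(k+1) * ((j : ℝ) * (((2*z).choose k : ℝ)))
      * ((x+k+1).factorial : ℝ) * ((x+j).factorial : ℝ) * ((y.factorial : ℝ))^2
      / (((x+y+k+2).factorial : ℝ) * ((x+y+j+1).factorial : ℝ)) := by
  show (-1:ℝ)^(k+1) * (((2*z - k) : ℕ) : ℝ) * (((2*z).choose k : ℝ))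
      * ((x+k+1).factorial : ℝ) * ((x+(2*z-k)).factorial : ℝ) * ((y.factorial : ℝ))^2
      / (((x+y+k+2).factorial : ℝ) * ((x+y+(2*z-k)+1).factorial : ℝ)) = _
  rw [show 2*z - k = j from by omega]
  ring

lemma gA_eq (x y z k j : ℕ) (hkj : k + j = 2*z) :
    gA x y z k = (-1:ℝ)^k * ((k : ℝ) * (((2*z).choose k : ℝ)))
      * ((x+k).factorial : ℝ) * ((x+j+1).factorial : ℝ) * ((y.factorial : ℝ))^2
      / (((x+y+k+1).factorial : ℝ) * ((x+y+j+2).factorial : ℝ)) := by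
  cases k with
  | zero => simp [gA]
  | succ k' =>
    show (-1:ℝ)^(k'+1) * (((2*z - k') : ℕ) : ℝ) * (((2*z).choose k' : ℝ))
      * ((x+k'+1).factorial : ℝ) * ((x+(2*z-k')).factorial : ℝ) * ((y.factorial : ℝ))^2
      / (((x+y+k'+2).factorial : ℝ) * ((x+y+(2*z-k')+1).factorial : ℝ)) = _
    rw [show 2*z - k' = j+1 from by omega,
        show x+(j+1) = x+j+1 from by omega,
        show x+y+(j+1)+1 = x+y+j+2 from by omega,
        show x+(k'+1) = x+k'+1 from by omega,
        show x+y+(k'+1)+1 = x+y+k'+2 from by omega]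
    have hcn : (j+1) * ((2*z).choose k') = (k'+1) * ((2*z).choose (k'+1)) := by
      have h := Nat.choose_succ_right_eq (2*z) k'
      rw [show 2*z - k' = j+1 from by omega] at h
      rw [Nat.mul_comm, Nat.mul_comm (k'+1)]
      exact h.symm
    have hc : ((j:ℝ)+1) * (((2*z).choose k' : ℝ)) = ((k':ℝ)+1) * (((2*z).choose (k'+1) : ℝ)) := by
      exact_mod_cast hcn
    push_cast
    linear_combination ((-1:ℝ)^(k'+1) * ((x+k'+1).factorial : ℝ) * ((x+j+1).factorial : ℝ)
      * ((y.factorial : ℝ))^2 / (((x+y+k'+2).factorial : ℝ) * ((x+y+j+2).factorial : ℝ))) * hc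

lemma step_core (x y z k j : ℕ) (hkj : k + j = 2*z) :
    ((y:ℝ)+1) * (gA x y z (k+1) - gA x y z k)
      = (-(((y:ℝ)+1) * (((y:ℝ)+k+1) + ((y:ℝ)+j+1))))
          * ((-1:ℝ)^k * (((2*z).choose k : ℝ)) * Bt (x+k) y * Bt (x+j) y)
        + ((((x:ℝ)+y+k+2) + ((x:ℝ)+y+j+2)) * ((x:ℝ)+y+k+j+2))
          * ((-1:ℝ)^k * (((2*z).choose k : ℝ)) * Bt (x+k) (y+1) * Bt (x+j) (y+1)) := by
  rw [gA_succ x y z k j hkj, gA_eq x y z k j hkj]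
  simp only [Bt]
  rw [show x+k+y+1 = x+y+k+1 from by omega,
      show x+j+y+1 = x+y+j+1 from by omega,
      show x+k+(y+1)+1 = x+y+k+2 from by omega,
      show x+j+(y+1)+1 = x+y+j+2 from by omega]
  have e1 : ((x+k+1).factorial : ℝ) = ((x:ℝ)+k+1) * ((x+k).factorial : ℝ) := by
    rw [Nat.factorial_succ]; push_cast; ring
  have e2 : ((x+j+1).factorial : ℝ) = ((x:ℝ)+j+1) * ((x+j).factorial : ℝ) := by
    rw [Nat.factorial_succ]; push_cast; ring
  have e3 : ((x+y+k+2).factorial : ℝ) = ((x:ℝ)+y+k+2) * ((x+y+k+1).factorial : ℝ) := by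
    rw [show x+y+k+2 = (x+y+k+1)+1 from by omega, Nat.factorial_succ]; push_cast; ring
  have e4 : ((x+y+j+2).factorial : ℝ) = ((x:ℝ)+y+j+2) * ((x+y+j+1).factorial : ℝ) := by
    rw [show x+y+j+2 = (x+y+j+1)+1 from by omega, Nat.factorial_succ]; push_cast; ring
  have e5 : (((y+1).factorial : ℝ)) = ((y:ℝ)+1) * ((y.factorial : ℝ)) := by
    rw [Nat.factorial_succ]; push_cast; ring
  rw [e1, e2, e3, e4, e5]
  have hz : (k:ℝ) + j = 2*(z:ℝ) := by exact_mod_cast hkj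
  have n1 : ((x+y+k+1).factorial : ℝ) ≠ 0 := factR_ne _
  have n2 : ((x+y+j+1).factorial : ℝ) ≠ 0 := factR_ne _
  have n3 : ((x:ℝ)+y+k+2) ≠ 0 := by positivity
  have n4 : ((x:ℝ)+y+j+2) ≠ 0 := by positivity
  field_simp
  ring

lemma neg_one_pow_sub (z k : ℕ) (h : k ≤ 2*z) : (-1:ℝ)^(2*z-k) = (-1:ℝ)^k := by
  have h1 : (-1:ℝ)^(2*z-k) * (-1:ℝ)^k = 1 := by
    rw [← pow_add, show 2*z-k+k = 2*z from by omega, pow_mul]; norm_num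
  have h2 : (-1:ℝ)^k * (-1:ℝ)^k = 1 := by
    rw [← pow_add, show k+k = 2*k from by omega, pow_mul]; norm_num
  exact mul_right_cancel₀ (pow_ne_zero k (by norm_num : (-1:ℝ) ≠ 0)) (h1.trans h2.symm)

lemma Bt_zero (a : ℕ) : Bt a 0 = 1 / ((a:ℝ)+1) := by
  rw [Bt, show a+0+1 = a+1 from by omega, Nat.factorial_succ]
  have := factR_ne a
  push_cast
  field_simp
  ring

lemma key (x z : ℕ) : ∀ y : ℕ,
    ∑ k ∈ range (2*z+1), (-1:ℝ)^k * (((2*z).choose k : ℝ)) * Bt (x+k) y * Bt (x+(2*z-k)) y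
      = ((x.factorial : ℝ) * (y.factorial : ℝ) * ((x+z).factorial : ℝ) * ((y+z).factorial : ℝ)
          * (((2*z).factorial : ℝ)))
        / (((x+y+z+1).factorial : ℝ) * ((x+y+2*z+1).factorial : ℝ) * ((z.factorial : ℝ))) := by
  intro y
  induction y with
  | zero =>
    have hsplit : ∀ k ∈ range (2*z+1),
        (-1:ℝ)^k * (((2*z).choose k : ℝ)) * Bt (x+k) 0 * Bt (x+(2*z-k)) 0
        = (1/(2*(x:ℝ)+2*z+2)) * ((-1:ℝ)^k * (((2*z).choose k : ℝ)) / (((x+k : ℕ):ℝ)+1))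
          + (1/(2*(x:ℝ)+2*z+2)) * ((-1:ℝ)^k * (((2*z).choose k : ℝ)) / (((x+(2*z-k) : ℕ):ℝ)+1)) := by
      intro k hk
      rw [Finset.mem_range] at hk
      rw [Bt_zero, Bt_zero]
      have h1 : ((x+k : ℕ):ℝ) = (x:ℝ)+k := by push_cast; ring
      have h2 : ((x+(2*z-k) : ℕ):ℝ) = (x:ℝ)+(2*z-k:ℕ) := by push_cast; ring
      have h3 : ((2*z-k : ℕ):ℝ) = 2*(z:ℝ)-k := by
        have : (k:ℝ) ≤ 2*z := by exact_mod_cast Nat.le_of_lt_succ hk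
        push_cast [Nat.cast_sub (Nat.le_of_lt_succ hk)]
        ring
      rw [h1, h2, h3]
      have d1 : (x:ℝ)+k+1 ≠ 0 := by positivity
      have d3 : 2*(x:ℝ)+2*z+2 ≠ 0 := by positivity
      have d2 : (x:ℝ)+(2*(z:ℝ)-k)+1 ≠ 0 := by
        have : (k:ℝ) ≤ 2*z := by exact_mod_cast Nat.le_of_lt_succ hk
        have hx0 : (0:ℝ) ≤ (x:ℝ) := Nat.cast_nonneg x
        have : (0:ℝ) < (x:ℝ)+(2*(z:ℝ)-k)+1 := by linarith
        linarith
      field_simp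
      ring
    rw [Finset.sum_congr rfl hsplit, Finset.sum_add_distrib, ← Finset.mul_sum, ← Finset.mul_sum]
    have hrefl : ∑ k ∈ range (2*z+1), (-1:ℝ)^k * (((2*z).choose k : ℝ)) / (((x+(2*z-k) : ℕ):ℝ)+1)
        = ∑ k ∈ range (2*z+1), (-1:ℝ)^k * (((2*z).choose k : ℝ)) / (((x+k : ℕ):ℝ)+1) := by
      rw [← Finset.sum_range_reflect]
      apply Finset.sum_congr rfl
      intro k hk
      rw [Finset.mem_range] at hk
      have hk' : k ≤ 2*z := Nat.le_of_lt_succ hk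
      rw [show 2*z+1-1-k = 2*z-k from by omega]
      rw [neg_one_pow_sub z k hk', Nat.choose_symm hk']
      rw [show x+(2*z-(2*z-k)) = x+k from by omega]
    rw [hrefl]
    have hL : ∑ k ∈ range (2*z+1), (-1:ℝ)^k * (((2*z).choose k : ℝ)) / (((x+k : ℕ):ℝ)+1)
        = (((2*z).factorial : ℝ)) * ((x.factorial : ℝ)) / (((2*z+x+1).factorial : ℝ)) := by
      rw [← L0 (2*z) x]
      apply Finset.sum_congr rfl
      intro k _
      push_cast
      ring
    rw [hL]
    rw [show x+0+z+1 = (x+z)+1 from by omega, show x+0+2*z+1 = 2*z+x+1 from by omega,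
        Nat.factorial_succ (x+z), Nat.factorial_zero]
    have n1 := factR_ne (x+z)
    have n2 := factR_ne (2*z+x+1)
    have n3 := factR_ne z
    have n4 : ((x:ℝ)+z+1) ≠ 0 := by positivity
    have n5 : 2*(x:ℝ)+2*z+2 ≠ 0 := by positivity
    push_cast
    field_simp
    ring
  | succ y ih =>
    have tele : ∑ k ∈ range (2*z+1), (gA x y z (k+1) - gA x y z k) = 0 := by
      rw [Finset.sum_range_sub (gA x y z)]
      have hend : gA x y z (2*z+1) = 0 := by
        show (-1:ℝ)^(2*z+1) * (((2*z - 2*z) : ℕ) : ℝ) * _ * _ * _ * _ / _ = 0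
        rw [Nat.sub_self]
        norm_num
      rw [hend]
      simp [gA]
    have hstep : ∀ k ∈ range (2*z+1),
        ((y:ℝ)+1) * (gA x y z (k+1) - gA x y z k)
          = (-(((y:ℝ)+1) * (2*(y:ℝ)+2*z+2)))
              * ((-1:ℝ)^k * (((2*z).choose k : ℝ)) * Bt (x+k) y * Bt (x+(2*z-k)) y)
            + ((2*(x:ℝ)+2*y+2*z+4) * ((x:ℝ)+y+2*z+2))
              * ((-1:ℝ)^k * (((2*z).choose k : ℝ)) * Bt (x+k) (y+1) * Bt (x+(2*z-k)) (y+1)) := by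
      intro k hk
      rw [Finset.mem_range] at hk
      have hk' : k ≤ 2*z := Nat.le_of_lt_succ hk
      have hkj : k + (2*z-k) = 2*z := by omega
      rw [step_core x y z k (2*z-k) hkj]
      have hcast : ((2*z-k : ℕ):ℝ) = 2*(z:ℝ)-k := by
        push_cast [Nat.cast_sub hk']
        ring
      rw [hcast]
      ring
    have tele2 : ∑ k ∈ range (2*z+1), ((y:ℝ)+1) * (gA x y z (k+1) - gA x y z k) = 0 := by
      rw [← Finset.mul_sum, tele, mul_zero]
    rw [Finset.sum_congr rfl hstep, Finset.sum_add_distrib, ← Finset.mul_sum, ← Finset.mul_sum,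
        ih] at tele2
    have hBc : (2*(x:ℝ)+2*y+2*z+4) * ((x:ℝ)+y+2*z+2) ≠ 0 := by positivity
    have hS : ∑ k ∈ range (2*z+1),
        (-1:ℝ)^k * (((2*z).choose k : ℝ)) * Bt (x+k) (y+1) * Bt (x+(2*z-k)) (y+1)
        = (((y:ℝ)+1) * (2*(y:ℝ)+2*z+2))
            * (((x.factorial : ℝ) * (y.factorial : ℝ) * ((x+z).factorial : ℝ) * ((y+z).factorial : ℝ)
                * (((2*z).factorial : ℝ)))
              / (((x+y+z+1).factorial : ℝ) * ((x+y+2*z+1).factorial : ℝ) * ((z.factorial : ℝ))))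
          / ((2*(x:ℝ)+2*y+2*z+4) * ((x:ℝ)+y+2*z+2)) := by
      field_simp at tele2 ⊢
      linarith [tele2]
    rw [hS]
    rw [show y+1+z = (y+z)+1 from by omega, show x+(y+1)+z+1 = (x+y+z+1)+1 from by omega,
        show x+(y+1)+2*z+1 = (x+y+2*z+1)+1 from by omega,
        Nat.factorial_succ (y+z), Nat.factorial_succ (x+y+z+1), Nat.factorial_succ (x+y+2*z+1),
        Nat.factorial_succ y]
    have n1 := factR_ne (x+y+z+1)
    have n2 := factR_ne (x+y+2*z+1)
    have n3 := factR_ne z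
    have n4 : ((x:ℝ)+y+z+1+1) ≠ 0 := by positivity
    have n5 : ((x:ℝ)+y+2*z+1+1) ≠ 0 := by positivity
    push_cast
    field_simp
    ring

lemma double_eq_sum (x y z : ℕ) :
    (∫ t₁ in (0:ℝ)..1, ∫ t₂ in (0:ℝ)..1,
        (t₁ ^ x * (1 - t₁) ^ y * t₂ ^ x * (1 - t₂) ^ y * (t₁ - t₂) ^ (2 * z)))
      = ∑ k ∈ range (2*z+1), (-1:ℝ)^k * (((2*z).choose k : ℝ)) * Bt (x+k) y * Bt (x+(2*z-k)) y := by
  have hpt : ∀ t₁ t₂ : ℝ, t₁ ^ x * (1 - t₁) ^ y * t₂ ^ x * (1 - t₂) ^ y * (t₁ - t₂) ^ (2 * z)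
      = ∑ k ∈ range (2*z+1),
          ((-1:ℝ)^k * (((2*z).choose k : ℝ)) * (t₁^(x+k) * (1-t₁)^y)) * (t₂^(x+(2*z-k)) * (1-t₂)^y) := by
    intro t₁ t₂
    rw [sub_pow t₁ t₂ (2*z), Finset.mul_sum]
    apply Finset.sum_congr rfl
    intro k hk
    rw [Finset.mem_range] at hk
    have hsgn : (-1:ℝ)^(k+2*z) = (-1:ℝ)^k := by
      rw [pow_add, pow_mul]; norm_num
    rw [hsgn, pow_add, pow_add]
    ring
  have inner : ∀ t₁ : ℝ, (∫ t₂ in (0:ℝ)..1,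
        (t₁ ^ x * (1 - t₁) ^ y * t₂ ^ x * (1 - t₂) ^ y * (t₁ - t₂) ^ (2 * z)))
      = ∑ k ∈ range (2*z+1),
          ((-1:ℝ)^k * (((2*z).choose k : ℝ)) * Bt (x+(2*z-k)) y) * (t₁^(x+k) * (1-t₁)^y) := by
    intro t₁
    have h1 : (∫ t₂ in (0:ℝ)..1,
        (t₁ ^ x * (1 - t₁) ^ y * t₂ ^ x * (1 - t₂) ^ y * (t₁ - t₂) ^ (2 * z)))
        = ∫ t₂ in (0:ℝ)..1, (∑ k ∈ range (2*z+1),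
          ((-1:ℝ)^k * (((2*z).choose k : ℝ)) * (t₁^(x+k) * (1-t₁)^y)) * (t₂^(x+(2*z-k)) * (1-t₂)^y)) := by
      apply intervalIntegral.integral_congr
      intro t₂ _
      exact hpt t₁ t₂
    rw [h1, intervalIntegral.integral_finset_sum]
    · apply Finset.sum_congr rfl
      intro k _
      rw [intervalIntegral.integral_const_mul, beta_eval]
      ring
    · intro k _
      exact Continuous.intervalIntegrable (by fun_prop) 0 1
  have h2 : (∫ t₁ in (0:ℝ)..1, ∫ t₂ in (0:ℝ)..1,
        (t₁ ^ x * (1 - t₁) ^ y * t₂ ^ x * (1 - t₂) ^ y * (t₁ - t₂) ^ (2 * z)))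
      = ∫ t₁ in (0:ℝ)..1, (∑ k ∈ range (2*z+1),
          ((-1:ℝ)^k * (((2*z).choose k : ℝ)) * Bt (x+(2*z-k)) y) * (t₁^(x+k) * (1-t₁)^y)) := by
    apply intervalIntegral.integral_congr
    intro t₁ _
    exact inner t₁
  rw [h2, intervalIntegral.integral_finset_sum]
  · apply Finset.sum_congr rfl
    intro k _
    rw [intervalIntegral.integral_const_mul, beta_eval]
    ring
  · intro k _
    exact Continuous.intervalIntegrable (by fun_prop) 0 1

theorem selberg_two_vars (x y z : ℕ) :
    ∫ t₁ in (0 : ℝ)..1, ∫ t₂ in (0 : ℝ)..1,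
        (t₁ ^ x * (1 - t₁) ^ y * t₂ ^ x * (1 - t₂) ^ y * (t₁ - t₂) ^ (2 * z)) =
      ∏ j ∈ Finset.Icc 1 2,
        ((x + (j - 1) * z).factorial : ℝ) * ((y + (j - 1) * z).factorial : ℝ) *
          ((j * z).factorial : ℝ) /
          (((x + y + j * z + 1).factorial : ℝ) * (z.factorial : ℝ)) := by
  rw [double_eq_sum, key x z y]
  have hIcc : Finset.Icc 1 2 = ({1, 2} : Finset ℕ) := by decide
  rw [hIcc, Finset.prod_pair (by norm_num : (1:ℕ) ≠ 2)]
  rw [show x + (1-1)*z = x from by omega, show y + (1-1)*z = y from by omega,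
      show 1*z = z from by omega]
  have n1 := factR_ne (x+y+z+1)
  have n2 := factR_ne (x+y+2*z+1)
  have n3 := factR_ne z
  field_simp
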